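/- arXiv:2307.06190 — 4 statements merged into one kernel-verified Lean document; each statement's English description precedes it below -/
import Mathlib

section
/- Let Ψ : ℝ^d → ℝ^d be continuous and positively homogeneous of degree one, and suppose Ψ^k(w) → 0 as k → ∞ for all w ∈ ℝ^d. Then there exist γ ∈ (0,1), a constant C < ∞, and a continuous, positively homogeneous of degree one function V : ℝ^d → ℝ₊ such that ‖w‖ ≤ V(w) ≤ C‖w‖ and V(Ψ(w)) ≤ γ V(w) for all w ∈ ℝ^d. -/
/-- Lyapunov lemma: a continuous, positively homogeneous (degree one) map
`Ψ : ℝ^d → ℝ^d` whose iterates converge to zero from every initial value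
admits a continuous, positively homogeneous Lyapunov function `V` with
`‖w‖ ≤ V(w) ≤ C‖w‖` and `V(Ψ(w)) ≤ γ V(w)` for some `γ ∈ (0,1)`, `C < ∞`. -/
theorem exists_lyapunov_function {d : ℕ}
    (Ψ : EuclideanSpace ℝ (Fin d) → EuclideanSpace ℝ (Fin d))
    (hΨcont : Continuous Ψ)
    (hΨhom : ∀ c : ℝ, 0 ≤ c → ∀ w, Ψ (c • w) = c • Ψ w)
    (hstable : ∀ w : EuclideanSpace ℝ (Fin d),
      Filter.Tendsto (fun k => Ψ^[k] w) Filter.atTop (nhds 0)) :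
    ∃ (γ : ℝ) (C : ℝ) (V : EuclideanSpace ℝ (Fin d) → ℝ),
      0 < γ ∧ γ < 1 ∧
      Continuous V ∧
      (∀ c : ℝ, 0 ≤ c → ∀ w, V (c • w) = c * V w) ∧
      (∀ w, 0 ≤ V w) ∧
      (∀ w, ‖w‖ ≤ V w) ∧
      (∀ w, V w ≤ C * ‖w‖) ∧
      (∀ w, V (Ψ w) ≤ γ * V w) := by
  classical
  have hΨ0 : Ψ 0 = 0 := by simpa using hΨhom 0 le_rfl 0
  -- iterates are positively homogeneous
  have hiterhom : ∀ n (c : ℝ), 0 ≤ c → ∀ w, Ψ^[n] (c • w) = c • Ψ^[n] w := by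
    intro n
    induction n with
    | zero => intro c hc w; simp
    | succ n ih =>
      intro c hc w
      simp only [Function.iterate_succ_apply]
      rw [hΨhom c hc, ih c hc]
  have hitercont : ∀ n, Continuous (Ψ^[n]) := fun n => hΨcont.iterate n
  -- norm scaling for iterates
  have hnormscale : ∀ n (w : EuclideanSpace ℝ (Fin d)), w ≠ 0 →
      ‖Ψ^[n] w‖ = ‖w‖ * ‖Ψ^[n] (‖w‖⁻¹ • w)‖ := by
    intro n w hw
    have hw' : (0:ℝ) < ‖w‖ := norm_pos_iff.mpr hw
    have h1 : Ψ^[n] w = ‖w‖ • Ψ^[n] (‖w‖⁻¹ • w) := by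
      rw [← hiterhom n ‖w‖ hw'.le, smul_smul, mul_inv_cancel₀ hw'.ne', one_smul]
    rw [h1, norm_smul, norm_norm]
  -- growth bound M
  obtain ⟨M, hM1, hM⟩ : ∃ M : ℝ, 1 ≤ M ∧
      ∀ w : EuclideanSpace ℝ (Fin d), ‖Ψ w‖ ≤ M * ‖w‖ := by
    obtain ⟨x0, hx0, hx0max⟩ :=
      (isCompact_closedBall (0:EuclideanSpace ℝ (Fin d)) 1).exists_isMaxOn
      ⟨0, Metric.mem_closedBall_self zero_le_one⟩ hΨcont.norm.continuousOn
    refine ⟨max 1 ‖Ψ x0‖, le_max_left _ _, fun w => ?_⟩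
    rcases eq_or_ne w 0 with rfl | hw
    · simp [hΨ0]
    · have hw' : (0:ℝ) < ‖w‖ := norm_pos_iff.mpr hw
      have hu1 : ‖(‖w‖⁻¹ • w : EuclideanSpace ℝ (Fin d))‖ = 1 := by
        rw [norm_smul, norm_inv, norm_norm, inv_mul_cancel₀ hw'.ne']
      have hu : (‖w‖⁻¹ • w : EuclideanSpace ℝ (Fin d)) ∈
          Metric.closedBall (0:EuclideanSpace ℝ (Fin d)) 1 := by
        simp [Metric.mem_closedBall, dist_zero_right, hu1]
      have h2 : ‖Ψ w‖ = ‖w‖ * ‖Ψ (‖w‖⁻¹ • w)‖ := by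
        simpa using hnormscale 1 w hw
      have h3 : ‖Ψ (‖w‖⁻¹ • w)‖ ≤ ‖Ψ x0‖ := hx0max hu
      calc ‖Ψ w‖ = ‖w‖ * ‖Ψ (‖w‖⁻¹ • w)‖ := h2
        _ ≤ ‖w‖ * max 1 ‖Ψ x0‖ :=
            mul_le_mul_of_nonneg_left (h3.trans (le_max_right _ _)) hw'.le
        _ = max 1 ‖Ψ x0‖ * ‖w‖ := mul_comm _ _
  have hM0 : (0:ℝ) ≤ M := le_trans zero_le_one hM1
  -- iterated growth bound
  have hMiter : ∀ n (w : EuclideanSpace ℝ (Fin d)), ‖Ψ^[n] w‖ ≤ M ^ n * ‖w‖ := by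
    intro n
    induction n with
    | zero => intro w; simp
    | succ n ih =>
      intro w
      rw [Function.iterate_succ_apply']
      calc ‖Ψ (Ψ^[n] w)‖ ≤ M * ‖Ψ^[n] w‖ := hM _
        _ ≤ M * (M ^ n * ‖w‖) := mul_le_mul_of_nonneg_left (ih w) hM0
        _ = M ^ (n+1) * ‖w‖ := by ring
  -- for each point some iterate has norm < 1/2
  have hhalf : ∀ x : EuclideanSpace ℝ (Fin d), ∃ k, ‖Ψ^[k] x‖ < 1/2 := fun x =>
    ((NormedAddCommGroup.tendsto_nhds_zero.mp (hstable x)) (1/2) (by norm_num)).exists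
  choose k hk using hhalf
  -- compactness: finite subcover of the sphere
  obtain ⟨s, hs⟩ := (isCompact_sphere (0:EuclideanSpace ℝ (Fin d)) 1).elim_finite_subcover
    (fun x => {y : EuclideanSpace ℝ (Fin d) | ‖Ψ^[k x] y‖ < 1/2})
    (fun x => isOpen_lt ((hitercont _).norm) continuous_const)
    (fun y _ => Set.mem_iUnion.mpr ⟨y, hk y⟩)
  set K := s.sup k + 1 with hKdef
  have hK0 : 0 < K := Nat.succ_pos _
  -- uniform halving
  have hhalfK : ∀ w : EuclideanSpace ℝ (Fin d), w ≠ 0 →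
      ∃ j, 1 ≤ j ∧ j ≤ K ∧ ‖Ψ^[j] w‖ ≤ (1/2) * ‖w‖ := by
    intro w hw
    have hw' : (0:ℝ) < ‖w‖ := norm_pos_iff.mpr hw
    have hu1 : ‖(‖w‖⁻¹ • w : EuclideanSpace ℝ (Fin d))‖ = 1 := by
      rw [norm_smul, norm_inv, norm_norm, inv_mul_cancel₀ hw'.ne']
    have husph : (‖w‖⁻¹ • w : EuclideanSpace ℝ (Fin d)) ∈
        Metric.sphere (0:EuclideanSpace ℝ (Fin d)) 1 := by
      simp [mem_sphere_iff_norm, hu1]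
    obtain ⟨x, hx⟩ := Set.mem_iUnion.mp (hs husph)
    obtain ⟨hxs, hxU⟩ := Set.mem_iUnion.mp hx
    have hxU' : ‖Ψ^[k x] (‖w‖⁻¹ • w)‖ < 1/2 := hxU
    refine ⟨k x, ?_, ?_, ?_⟩
    · rcases Nat.eq_zero_or_pos (k x) with h0 | h1
      · exfalso
        rw [h0] at hxU'
        simp only [Function.iterate_zero_apply] at hxU'
        rw [hu1] at hxU'
        norm_num at hxU'
      · exact h1
    · exact le_trans (Finset.le_sup hxs) (Nat.le_succ _)
    · rw [hnormscale (k x) w hw]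
      nlinarith [hxU'.le, hw'.le]
  -- geometric decay
  have hdecay : ∀ n (w : EuclideanSpace ℝ (Fin d)),
      ‖Ψ^[n] w‖ ≤ M ^ K * (1/2) ^ (n / K) * ‖w‖ := by
    intro n
    induction n using Nat.strong_induction_on with
    | _ n ih =>
      intro w
      rcases lt_or_ge n K with hn | hn
      · have h0 : n / K = 0 := Nat.div_eq_of_lt hn
        rw [h0, pow_zero, mul_one]
        calc ‖Ψ^[n] w‖ ≤ M ^ n * ‖w‖ := hMiter n w
          _ ≤ M ^ K * ‖w‖ :=
            mul_le_mul_of_nonneg_right (pow_le_pow_right₀ hM1 hn.le) (norm_nonneg w)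
      · rcases eq_or_ne w 0 with rfl | hw
        · have hz : Ψ^[n] (0:EuclideanSpace ℝ (Fin d)) = 0 := by
            simpa using hiterhom n 0 le_rfl 0
          simp [hz]
        · obtain ⟨j, hj1, hjK, hjhalf⟩ := hhalfK w hw
          have hjn : j ≤ n := hjK.trans hn
          have hlt : n - j < n := Nat.sub_lt (lt_of_lt_of_le hK0 hn) hj1
          have key : Ψ^[n] w = Ψ^[n - j] (Ψ^[j] w) := by
            rw [← Function.iterate_add_apply, Nat.sub_add_cancel hjn]
          have hdivle : n / K ≤ (n - j) / K + 1 := by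
            have h1 : n ≤ (n - j) + K := by omega
            calc n / K ≤ ((n - j) + K) / K := Nat.div_le_div_right h1
              _ = (n - j) / K + 1 := Nat.add_div_right _ hK0
          have hpowle : ((1:ℝ)/2) ^ ((n - j) / K + 1) ≤ (1/2) ^ (n / K) :=
            pow_le_pow_of_le_one (by norm_num) (by norm_num) hdivle
          have hMK0 : (0:ℝ) ≤ M ^ K := pow_nonneg hM0 K
          rw [key]
          calc ‖Ψ^[n-j] (Ψ^[j] w)‖
              ≤ M ^ K * (1/2) ^ ((n-j) / K) * ‖Ψ^[j] w‖ := ih _ hlt _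
            _ ≤ M ^ K * (1/2) ^ ((n-j) / K) * ((1/2) * ‖w‖) := by
                refine mul_le_mul_of_nonneg_left hjhalf ?_
                positivity
            _ = M ^ K * (1/2) ^ ((n-j) / K + 1) * ‖w‖ := by
                rw [pow_succ]; ring
            _ ≤ M ^ K * (1/2) ^ (n / K) * ‖w‖ := by
                refine mul_le_mul_of_nonneg_right ?_ (norm_nonneg w)
                exact mul_le_mul_of_nonneg_left hpowle hMK0
  -- choose N with uniform contraction by 1/2
  obtain ⟨m, hm⟩ : ∃ m : ℕ, 2 * M ^ K < 2 ^ m :=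
    pow_unbounded_of_one_lt _ one_lt_two
  have hMK1 : (1:ℝ) ≤ M ^ K := one_le_pow₀ hM1
  have hm1 : 1 ≤ m := by
    by_contra h
    push_neg at h
    interval_cases m
    norm_num at hm
    linarith
  set N := K * m with hNdef
  have hN0 : 0 < N := Nat.mul_pos hK0 hm1
  have hNdiv : N / K = m := by
    rw [hNdef]; exact Nat.mul_div_cancel_left m hK0
  have hcontract : ∀ w : EuclideanSpace ℝ (Fin d), ‖Ψ^[N] w‖ ≤ (1/2) * ‖w‖ := by
    intro w
    have h1 := hdecay N w
    rw [hNdiv] at h1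
    have h2 : M ^ K * (1/2) ^ m ≤ 1/2 := by
      have h2m : (0:ℝ) < 2 ^ m := by positivity
      have hpow : ((1:ℝ)/2) ^ m = (2 ^ m)⁻¹ := by
        rw [one_div, inv_pow]
      rw [hpow, mul_inv_le_iff₀ h2m]
      nlinarith
    calc ‖Ψ^[N] w‖ ≤ M ^ K * (1/2) ^ m * ‖w‖ := h1
      _ ≤ (1/2) * ‖w‖ := mul_le_mul_of_nonneg_right h2 (norm_nonneg w)
  -- define β, γ, V, C
  have hNposR : (0:ℝ) < (N:ℝ) := by exact_mod_cast hN0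
  set β : ℝ := (2:ℝ) ^ ((N:ℝ)⁻¹) with hβdef
  have hβ1 : 1 < β := by
    rw [hβdef]
    exact Real.one_lt_rpow_iff_of_pos two_pos |>.mpr (Or.inl ⟨one_lt_two, by positivity⟩)
  have hβ0 : (0:ℝ) < β := lt_trans one_pos hβ1
  have hβN : β ^ N = 2 := by
    rw [hβdef, ← Real.rpow_natCast ((2:ℝ) ^ ((N:ℝ)⁻¹)) N, ← Real.rpow_mul (by norm_num),
      inv_mul_cancel₀ hNposR.ne', Real.rpow_one]
  set V : EuclideanSpace ℝ (Fin d) → ℝ :=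
    fun w => ∑ j ∈ Finset.range N, β ^ j * ‖Ψ^[j] w‖ with hVdef
  have hV : ∀ w, V w = ∑ j ∈ Finset.range N, β ^ j * ‖Ψ^[j] w‖ := fun _ => rfl
  refine ⟨β⁻¹, ∑ j ∈ Finset.range N, β ^ j * M ^ j, V, inv_pos.mpr hβ0,
    inv_lt_one_of_one_lt₀ hβ1, ?_, ?_, ?_, ?_, ?_, ?_⟩
  · -- continuity
    exact continuous_finset_sum _ fun j _ => continuous_const.mul (hitercont j).norm
  · -- homogeneity
    intro c hc w
    rw [hV, hV, Finset.mul_sum]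
    refine Finset.sum_congr rfl fun j _ => ?_
    rw [hiterhom j c hc, norm_smul, Real.norm_of_nonneg hc]
    ring
  · -- nonneg
    intro w
    rw [hV]
    apply Finset.sum_nonneg
    intro j _
    positivity
  · -- lower bound
    intro w
    rw [hV]
    have h0mem : 0 ∈ Finset.range N := Finset.mem_range.mpr hN0
    have := Finset.single_le_sum (f := fun j => β ^ j * ‖Ψ^[j] w‖)
      (fun j _ => by positivity) h0mem
    simpa using this
  · -- upper bound
    intro w
    rw [hV, Finset.sum_mul]
    apply Finset.sum_le_sum
    intro j _
    have hβj : (0:ℝ) ≤ β ^ j := by positivity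
    calc β ^ j * ‖Ψ^[j] w‖ ≤ β ^ j * (M ^ j * ‖w‖) :=
        mul_le_mul_of_nonneg_left (hMiter j w) hβj
      _ = β ^ j * M ^ j * ‖w‖ := by ring
  · -- contraction
    intro w
    have hshift : β * V (Ψ w) = V w + β ^ N * ‖Ψ^[N] w‖ - ‖w‖ := by
      have h1 : β * V (Ψ w) = ∑ j ∈ Finset.range N, β ^ (j+1) * ‖Ψ^[j+1] w‖ := by
        rw [hV, Finset.mul_sum]
        refine Finset.sum_congr rfl fun j _ => ?_
        rw [Function.iterate_succ_apply, pow_succ]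
        ring
      have h2 := Finset.sum_range_succ' (fun j => β ^ j * ‖Ψ^[j] w‖) N
      have h3 := Finset.sum_range_succ (fun j => β ^ j * ‖Ψ^[j] w‖) N
      simp only [pow_zero, Function.iterate_zero_apply, one_mul] at h2
      rw [h1, hV]
      linarith [h2, h3]
    have hfin : β ^ N * ‖Ψ^[N] w‖ ≤ ‖w‖ := by
      rw [hβN]
      have := hcontract w
      linarith
    rw [← mul_le_mul_iff_right₀ hβ0, mul_inv_cancel_left₀ hβ0.ne']
    linarith
end

section
/- Given γ ∈ (0,1), M ∈ ℕ, and a continuous positively homogeneous degree-one map Ψ : ℝ^d → ℝ^d with ‖Ψ^M(w)‖ < γ^M ‖w‖ for all w ≠ 0, the function V(w) := Σ_{k=0}^{M-1} γ^{-k} ‖Ψ^k(w)‖ satisfies V(w) ≥ ‖w‖ and V(Ψ(w)) < γ V(w) for all w ≠ 0. -/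
/-- The explicit Lyapunov construction: if `‖Ψ^M(w)‖ < γ^M ‖w‖` for all `w ≠ 0`,
then `V(w) := Σ_{k=0}^{M-1} γ^{-k} ‖Ψ^k(w)‖` satisfies `V(w) ≥ ‖w‖` and
`V(Ψ(w)) < γ V(w)` for all `w ≠ 0`. -/
theorem lyapunov_construction {d : ℕ}
    (γ : ℝ) (hγ0 : 0 < γ) (hγ1 : γ < 1) (M : ℕ)
    (Ψ : EuclideanSpace ℝ (Fin d) → EuclideanSpace ℝ (Fin d))
    (hΨcont : Continuous Ψ)
    (hΨhom : ∀ c : ℝ, 0 ≤ c → ∀ w, Ψ (c • w) = c • Ψ w)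
    (hM : ∀ w : EuclideanSpace ℝ (Fin d), w ≠ 0 → ‖Ψ^[M] w‖ < γ ^ M * ‖w‖) :
    ∀ w : EuclideanSpace ℝ (Fin d), w ≠ 0 →
      ‖w‖ ≤ (∑ k ∈ Finset.range M, (γ ^ k)⁻¹ * ‖Ψ^[k] w‖) ∧
      (∑ k ∈ Finset.range M, (γ ^ k)⁻¹ * ‖Ψ^[k] (Ψ w)‖) <
        γ * (∑ k ∈ Finset.range M, (γ ^ k)⁻¹ * ‖Ψ^[k] w‖) := by
  intro w hw
  -- M must be positive, else hM w gives ‖w‖ < ‖w‖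
  obtain ⟨N, rfl⟩ : ∃ N, M = N + 1 := by
    cases M with
    | zero => exact absurd (hM w hw) (by simp)
    | succ N => exact ⟨N, rfl⟩
  have hterm : ∀ k, 0 ≤ (γ ^ k)⁻¹ * ‖Ψ^[k] w‖ := fun k => by positivity
  constructor
  · calc ‖w‖ = (γ ^ 0)⁻¹ * ‖Ψ^[0] w‖ := by simp
    _ ≤ _ := Finset.single_le_sum (f := fun k => (γ ^ k)⁻¹ * ‖Ψ^[k] w‖)
        (fun k _ => hterm k) (Finset.mem_range.mpr (Nat.succ_pos N))
  · have hshift : ∀ k : ℕ, Ψ^[k] (Ψ w) = Ψ^[k + 1] w := fun k => by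
      rw [Function.iterate_succ_apply]
    have hγN : (0 : ℝ) < γ ^ N := pow_pos hγ0 N
    have key : (γ ^ N)⁻¹ * ‖Ψ^[N + 1] w‖ < γ * ‖w‖ := by
      have := hM w hw
      calc (γ ^ N)⁻¹ * ‖Ψ^[N + 1] w‖ < (γ ^ N)⁻¹ * (γ ^ (N + 1) * ‖w‖) := by
            exact mul_lt_mul_of_pos_left this (by positivity)
        _ = γ * ‖w‖ := by field_simp [pow_succ]; ring
    have lhs_eq : (∑ k ∈ Finset.range (N + 1), (γ ^ k)⁻¹ * ‖Ψ^[k] (Ψ w)‖)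
        = (∑ k ∈ Finset.range N, (γ ^ k)⁻¹ * ‖Ψ^[k + 1] w‖)
          + (γ ^ N)⁻¹ * ‖Ψ^[N + 1] w‖ := by
      rw [Finset.sum_range_succ]
      simp only [hshift]
    have rhs_eq : γ * (∑ k ∈ Finset.range (N + 1), (γ ^ k)⁻¹ * ‖Ψ^[k] w‖)
        = (∑ k ∈ Finset.range N, (γ ^ k)⁻¹ * ‖Ψ^[k + 1] w‖) + γ * ‖w‖ := by
      rw [Finset.sum_range_succ', mul_add, Finset.mul_sum]
      congr 1
      · apply Finset.sum_congr rfl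
        intro k _
        rw [pow_succ]
        field_simp
      · simp [mul_comm]
    rw [lhs_eq, rhs_eq]
    exact (add_lt_add_iff_left _).mpr key
end

section
/- Let I be a finite index set, {𝒲_i}_{i∈I} a partition of ℝ^d, {A[i]}_{i∈I} d×d matrices, and 𝒥 ⊆ I×I containing all pairs (i,j) for which there exists w ∈ 𝒲_i with A[i]w ∈ 𝒲_j. Suppose there exist γ ∈ (0,1), functions ⟪·⟫_i : ℝ^d → ℝ and constants c_i > 0 (i ∈ I) such that: (a) c_i‖w‖ ≤ ⟪w⟫_i for all w ∈ 𝒲_i; and (b) ⟪A[i]w⟫_j ≤ γ ⟪w⟫_i for all w ∈ 𝒲_i with A[i]w ∈ 𝒲_j, for all (i,j) ∈ 𝒥. Then the piecewise system w_t = A[σ(w_{t-1})]w_{t-1}, where σ(w) = i iff w ∈ 𝒲_i, is globally asymptotically stable: w_t → 0 for every w₀ ∈ ℝ^d. -/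
open Matrix

/-- Relaxed-Lyapunov stability of a piecewise linear system: if the partition
cells `𝒲_i` carry functions `⟪·⟫_i` satisfying the conic lower bound
`c_i‖w‖ ≤ ⟪w⟫_i` on `𝒲_i` and the transition contraction
`⟪A[i]w⟫_j ≤ γ⟪w⟫_i` along admitted transitions, with `γ ∈ (0,1)`, then every
trajectory of `w_t = A[σ(w_{t-1})]w_{t-1}` converges to zero. -/
theorem piecewise_system_tendsto_zero {d : ℕ} {I : Type*} [Fintype I]
    (W : I → Set (Fin d → ℝ))
    (hpart : ∀ w : Fin d → ℝ, ∃! i : I, w ∈ W i)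
    (A : I → Matrix (Fin d) (Fin d) ℝ)
    (𝒥 : Set (I × I))
    (h𝒥 : ∀ i j : I, (∃ w ∈ W i, A i *ᵥ w ∈ W j) → (i, j) ∈ 𝒥)
    (γ : ℝ) (hγ0 : 0 < γ) (hγ1 : γ < 1)
    (N : I → (Fin d → ℝ) → ℝ) (c : I → ℝ) (hc : ∀ i, 0 < c i)
    (hlower : ∀ i : I, ∀ w ∈ W i, c i * ‖w‖ ≤ N i w)
    (hcontr : ∀ i j : I, (i, j) ∈ 𝒥 →
      ∀ w ∈ W i, A i *ᵥ w ∈ W j → N j (A i *ᵥ w) ≤ γ * N i w) :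
    ∀ w : ℕ → Fin d → ℝ,
      (∀ t : ℕ, ∀ i : I, w t ∈ W i → w (t + 1) = A i *ᵥ w t) →
      Filter.Tendsto w Filter.atTop (nhds 0) := by
  intro w hw
  classical
  -- the selector
  let s : ℕ → I := fun t => (hpart (w t)).exists.choose
  have hs : ∀ t, w t ∈ W (s t) := fun t => (hpart (w t)).exists.choose_spec
  have hstep : ∀ t, N (s (t+1)) (w (t+1)) ≤ γ * N (s t) (w t) := by
    intro t
    have hwt : w (t+1) = A (s t) *ᵥ w t := hw t (s t) (hs t)
    have hmem : A (s t) *ᵥ w t ∈ W (s (t+1)) := hwt ▸ hs (t+1)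
    have hJ : (s t, s (t+1)) ∈ 𝒥 := h𝒥 _ _ ⟨w t, hs t, hmem⟩
    have := hcontr _ _ hJ (w t) (hs t) hmem
    rwa [hwt]
  have hbound : ∀ t, N (s t) (w t) ≤ γ ^ t * N (s 0) (w 0) := by
    intro t
    induction t with
    | zero => simp
    | succ t ih =>
      calc N (s (t+1)) (w (t+1)) ≤ γ * N (s t) (w t) := hstep t
        _ ≤ γ * (γ ^ t * N (s 0) (w 0)) := by
            exact mul_le_mul_of_nonneg_left ih hγ0.le
        _ = γ ^ (t+1) * N (s 0) (w 0) := by ring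
  have hI : Nonempty I := ⟨s 0⟩
  have hne : (Finset.univ : Finset I).Nonempty := Finset.univ_nonempty
  set cm : ℝ := Finset.univ.inf' hne c with hcm
  have hcm0 : 0 < cm := (Finset.lt_inf'_iff hne).2 fun i _ => hc i
  have hcmle : ∀ i, cm ≤ c i := fun i => Finset.inf'_le c (Finset.mem_univ i)
  have hnorm : ∀ t, ‖w t‖ ≤ (N (s 0) (w 0) / cm) * γ ^ t := by
    intro t
    have h1 : cm * ‖w t‖ ≤ N (s t) (w t) := by
      calc cm * ‖w t‖ ≤ c (s t) * ‖w t‖ :=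
            mul_le_mul_of_nonneg_right (hcmle _) (norm_nonneg _)
        _ ≤ N (s t) (w t) := hlower _ _ (hs t)
    have h2 : cm * ‖w t‖ ≤ γ ^ t * N (s 0) (w 0) := h1.trans (hbound t)
    rw [div_mul_eq_mul_div, le_div_iff₀ hcm0]
    nlinarith
  have hγ : Filter.Tendsto (fun t : ℕ => (N (s 0) (w 0) / cm) * γ ^ t)
      Filter.atTop (nhds 0) := by
    have := (tendsto_pow_atTop_nhds_zero_of_lt_one hγ0.le hγ1).const_mul
      (N (s 0) (w 0) / cm)
    simpa using this
  rw [tendsto_zero_iff_norm_tendsto_zero]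
  exact squeeze_zero (fun t => norm_nonneg _) hnorm hγ
end

section
/- Let Q = [[1, −φ_{yx}ᵀΦ_{xx}^{-1}],[0, I_{p−1}]] and P^{-1} = [[φ̄⁺, 0, 0],[0, φ̄⁻, 0],[φ⁺_{xy}, φ⁻_{xy}, Φ_{xx}]] where φ̄± := φ±_{yy} − φ_{yx}ᵀΦ_{xx}^{-1}φ±_{xy} ≠ 0 and Φ_{xx} is invertible. Then for Φ₀ = [[φ⁺_{yy}, φ⁻_{yy}, φ_{yx}ᵀ],[φ⁺_{xy}, φ⁻_{xy}, Φ_{xx}]], we have Q Φ₀ P = I*_p, where I*_p := [[1,1,0],[0,0,I_{p−1}]] (a p×(p+1) matrix) and P is the inverse of P^{-1}. -/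
open Matrix

variable {n : Type*} [Fintype n] [DecidableEq n]

/-- The `p × (p+1)` contemporaneous coefficient matrix `Φ₀` of a CKSVAR, with
columns indexed by `(y⁺, y⁻, x)`. -/
def cksvarPhi0 (φyyp φyym : ℝ) (φyx φxyp φxym : n → ℝ) (Φxx : Matrix n n ℝ) :
    Matrix (Unit ⊕ n) (Unit ⊕ Unit ⊕ n) ℝ :=
  Matrix.of fun r c =>
    match r, c with
    | Sum.inl _, Sum.inl _ => φyyp
    | Sum.inl _, Sum.inr (Sum.inl _) => φyym
    | Sum.inl _, Sum.inr (Sum.inr j) => φyx j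
    | Sum.inr i, Sum.inl _ => φxyp i
    | Sum.inr i, Sum.inr (Sum.inl _) => φxym i
    | Sum.inr i, Sum.inr (Sum.inr j) => Φxx i j

/-- The matrix `Q = [[1, −φ_yxᵀ Φ_xx⁻¹], [0, I]]`. -/
noncomputable def cksvarQ (φyx : n → ℝ) (Φxx : Matrix n n ℝ) :
    Matrix (Unit ⊕ n) (Unit ⊕ n) ℝ :=
  Matrix.fromBlocks 1 (Matrix.of fun (_ : Unit) j => -(φyx ᵥ* Φxx⁻¹) j) 0 1

/-- The matrix `P⁻¹ = [[φ̄⁺,0,0],[0,φ̄⁻,0],[φ⁺_xy, φ⁻_xy, Φ_xx]]`, where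
`φ̄± = φ±_yy − φ_yxᵀ Φ_xx⁻¹ φ±_xy`. -/
noncomputable def cksvarPinv (φyyp φyym : ℝ) (φyx φxyp φxym : n → ℝ)
    (Φxx : Matrix n n ℝ) : Matrix (Unit ⊕ Unit ⊕ n) (Unit ⊕ Unit ⊕ n) ℝ :=
  Matrix.of fun r c =>
    match r, c with
    | Sum.inl _, Sum.inl _ => φyyp - φyx ⬝ᵥ Φxx⁻¹ *ᵥ φxyp
    | Sum.inr (Sum.inl _), Sum.inr (Sum.inl _) => φyym - φyx ⬝ᵥ Φxx⁻¹ *ᵥ φxym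
    | Sum.inr (Sum.inr i), Sum.inl _ => φxyp i
    | Sum.inr (Sum.inr i), Sum.inr (Sum.inl _) => φxym i
    | Sum.inr (Sum.inr i), Sum.inr (Sum.inr j) => Φxx i j
    | _, _ => 0

/-- The canonical contemporaneous coefficient matrix `I*_p = [[1,1,0],[0,0,I]]`. -/
def cksvarIstar : Matrix (Unit ⊕ n) (Unit ⊕ Unit ⊕ n) ℝ :=
  Matrix.of fun r c =>
    match r, c with
    | Sum.inl _, Sum.inl _ => 1
    | Sum.inl _, Sum.inr (Sum.inl _) => 1
    | Sum.inr i, Sum.inr (Sum.inr j) => if i = j then 1 else 0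
    | _, _ => 0

/-- The matrix identity `Q Φ₀ P = I*_p` underlying the canonical
representation of the CKSVAR (Proposition 1). -/
theorem cksvar_canonical_identity (φyyp φyym : ℝ) (φyx φxyp φxym : n → ℝ)
    (Φxx : Matrix n n ℝ) (hΦxx : IsUnit Φxx.det)
    (hbarp : φyyp - φyx ⬝ᵥ Φxx⁻¹ *ᵥ φxyp ≠ 0)
    (hbarm : φyym - φyx ⬝ᵥ Φxx⁻¹ *ᵥ φxym ≠ 0) :
    cksvarQ φyx Φxx * cksvarPhi0 φyyp φyym φyx φxyp φxym Φxx *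
        (cksvarPinv φyyp φyym φyx φxyp φxym Φxx)⁻¹ = cksvarIstar := by
  have hXX : Φxx * Φxx⁻¹ = 1 := Matrix.mul_nonsing_inv _ hΦxx
  have hXX' : Φxx⁻¹ * Φxx = 1 := Matrix.nonsing_inv_mul _ hΦxx
  set φbp := φyyp - φyx ⬝ᵥ Φxx⁻¹ *ᵥ φxyp with hφbp
  set φbm := φyym - φyx ⬝ᵥ Φxx⁻¹ *ᵥ φxym with hφbm
  set M : Matrix (Unit ⊕ Unit ⊕ n) (Unit ⊕ Unit ⊕ n) ℝ :=
    Matrix.of fun r c =>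
      match r, c with
      | Sum.inl _, Sum.inl _ => φbp⁻¹
      | Sum.inr (Sum.inl _), Sum.inr (Sum.inl _) => φbm⁻¹
      | Sum.inr (Sum.inr i), Sum.inl _ => -((Φxx⁻¹ *ᵥ φxyp) i) * φbp⁻¹
      | Sum.inr (Sum.inr i), Sum.inr (Sum.inl _) => -((Φxx⁻¹ *ᵥ φxym) i) * φbm⁻¹
      | Sum.inr (Sum.inr i), Sum.inr (Sum.inr j) => Φxx⁻¹ i j
      | _, _ => 0 with hM
  have hvp : Φxx *ᵥ (Φxx⁻¹ *ᵥ φxyp) = φxyp := by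
    rw [Matrix.mulVec_mulVec, hXX, Matrix.one_mulVec]
  have hvm : Φxx *ᵥ (Φxx⁻¹ *ᵥ φxym) = φxym := by
    rw [Matrix.mulVec_mulVec, hXX, Matrix.one_mulVec]
  have hvp' : ∀ i, ∑ j, Φxx i j * (Φxx⁻¹ *ᵥ φxyp) j = φxyp i := fun i => by
    have := congrFun hvp i
    simpa [Matrix.mulVec, dotProduct] using this
  have hvm' : ∀ i, ∑ j, Φxx i j * (Φxx⁻¹ *ᵥ φxym) j = φxym i := fun i => by
    have := congrFun hvm i
    simpa [Matrix.mulVec, dotProduct] using this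
  have hPM : cksvarPinv φyyp φyym φyx φxyp φxym Φxx * M = 1 := by
    ext r c
    rcases r with _ | r
    · rcases c with _ | c
      · simp [Matrix.mul_apply, cksvarPinv, Fintype.sum_sum_type, hM,
          mul_inv_cancel₀ hbarp, Matrix.one_apply, ← hφbp]
      · rcases c with _ | c <;>
          simp [Matrix.mul_apply, cksvarPinv, Fintype.sum_sum_type, hM, Matrix.one_apply]
    · rcases r with _ | r
      · rcases c with _ | c
        · simp [Matrix.mul_apply, cksvarPinv, Fintype.sum_sum_type, hM, Matrix.one_apply]
        · rcases c with _ | c <;>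
            simp [Matrix.mul_apply, cksvarPinv, Fintype.sum_sum_type, hM,
              mul_inv_cancel₀ hbarm, Matrix.one_apply, ← hφbm]
      · rcases c with _ | c
        · have : φxyp r * φbp⁻¹ +
              ∑ j, Φxx r j * (-((Φxx⁻¹ *ᵥ φxyp) j) * φbp⁻¹) = 0 := by
            have : ∑ j, Φxx r j * (-((Φxx⁻¹ *ᵥ φxyp) j) * φbp⁻¹) =
                -(∑ j, Φxx r j * (Φxx⁻¹ *ᵥ φxyp) j) * φbp⁻¹ := by
              simp [Finset.sum_mul, mul_assoc, mul_neg, neg_mul, Finset.sum_neg_distrib]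
            rw [this, hvp']
            ring
          simpa [Matrix.mul_apply, cksvarPinv, Fintype.sum_sum_type, hM,
            Matrix.one_apply] using this
        · rcases c with _ | c
          · have : φxym r * φbm⁻¹ +
                ∑ j, Φxx r j * (-((Φxx⁻¹ *ᵥ φxym) j) * φbm⁻¹) = 0 := by
              have : ∑ j, Φxx r j * (-((Φxx⁻¹ *ᵥ φxym) j) * φbm⁻¹) =
                  -(∑ j, Φxx r j * (Φxx⁻¹ *ᵥ φxym) j) * φbm⁻¹ := by
                simp [Finset.sum_mul, mul_assoc, mul_neg, neg_mul, Finset.sum_neg_distrib]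
              rw [this, hvm']
              ring
            simpa [Matrix.mul_apply, cksvarPinv, Fintype.sum_sum_type, hM,
              Matrix.one_apply] using this
          · have := congrFun (congrFun hXX r) c
            simpa [Matrix.mul_apply, cksvarPinv, Fintype.sum_sum_type, hM,
              Matrix.one_apply] using this
  have hdet : IsUnit (cksvarPinv φyyp φyym φyx φxyp φxym Φxx).det :=
    Matrix.isUnit_det_of_right_inverse hPM
  have key : cksvarQ φyx Φxx * cksvarPhi0 φyyp φyym φyx φxyp φxym Φxx =
      cksvarIstar (n := n) * cksvarPinv φyyp φyym φyx φxyp φxym Φxx := by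
    have hrow : ∀ j, φyx j - ∑ k, (φyx ᵥ* Φxx⁻¹) k * Φxx k j = 0 := fun j => by
      have h := congrFun (Matrix.vecMul_vecMul φyx Φxx⁻¹ Φxx) j
      rw [hXX', Matrix.vecMul_one] at h
      have h2 : ((φyx ᵥ* Φxx⁻¹) ᵥ* Φxx) j = ∑ k, (φyx ᵥ* Φxx⁻¹) k * Φxx k j := by
        simp [Matrix.vecMul, dotProduct]
      rw [h2] at h
      linarith [h]
    have hdp : ∀ w : n → ℝ, φyx ⬝ᵥ Φxx⁻¹ *ᵥ w = ∑ k, (φyx ᵥ* Φxx⁻¹) k * w k := fun w => by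
      rw [Matrix.dotProduct_mulVec]
      simp [dotProduct]
    ext r c
    rcases r with _ | r
    · rcases c with _ | c
      · have h := hdp φxyp
        simp only [Matrix.mul_apply, cksvarQ, cksvarPhi0, cksvarIstar, cksvarPinv,
          Fintype.sum_sum_type, Matrix.of_apply, Finset.univ_unique,
          Finset.sum_singleton, Matrix.one_apply_eq, one_mul, mul_one,
          Matrix.fromBlocks_apply₁₁, Matrix.fromBlocks_apply₁₂, hφbp, h,
          neg_mul, Finset.sum_neg_distrib]
        simp [sub_eq_add_neg]
      · rcases c with _ | c
        · have h := hdp φxym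
          simp only [Matrix.mul_apply, cksvarQ, cksvarPhi0, cksvarIstar, cksvarPinv,
            Fintype.sum_sum_type, Matrix.of_apply, Finset.univ_unique,
            Finset.sum_singleton, Matrix.one_apply_eq, one_mul, mul_one,
            Matrix.fromBlocks_apply₁₁, Matrix.fromBlocks_apply₁₂, hφbm, h,
            neg_mul, Finset.sum_neg_distrib]
          simp [sub_eq_add_neg]
        · have := hrow c
          simp [Matrix.mul_apply, cksvarQ, cksvarPhi0, cksvarIstar, cksvarPinv,
            Fintype.sum_sum_type, Matrix.fromBlocks]
          linarith [this]
    · rcases c with _ | c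
      · simp [Matrix.mul_apply, cksvarQ, cksvarPhi0, cksvarIstar, cksvarPinv,
          Fintype.sum_sum_type, Matrix.fromBlocks, Matrix.one_apply]
      · rcases c with _ | c <;>
          simp [Matrix.mul_apply, cksvarQ, cksvarPhi0, cksvarIstar, cksvarPinv,
            Fintype.sum_sum_type, Matrix.fromBlocks, Matrix.one_apply]
  rw [key, Matrix.mul_assoc, Matrix.mul_nonsing_inv _ hdet, Matrix.mul_one]
end
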